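/- The relation ≤_{J,δ} is a partial order on W^J: it is reflexive, transitive, and antisymmetric (if w ≤_{J,δ} w' and w' ≤_{J,δ} w for w, w' ∈ W^J, then w = w'). -/

import Mathlib

open CoxeterSystem

variable {B : Type*} [Finite B] {W : Type*} [Group W] {M : CoxeterMatrix B}

namespace PartialConjugation

/-- The standard parabolic subgroup `W_J` of `W`, generated by the simple
reflections indexed by `J`. -/
def parab (cs : CoxeterSystem M W) (J : Set B) : Subgroup W :=
  Subgroup.closure (cs.simple '' J)

/-- The simple reflection `s_j` (for `j ∈ J`), viewed as an element of `W_J`. -/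
def sJ (cs : CoxeterSystem M W) (J : Set B) (j : B) (hj : j ∈ J) : parab cs J :=
  ⟨cs.simple j, Subgroup.subset_closure ⟨j, hj, rfl⟩⟩

/-- `w ∈ W^J`: `w` is a minimal length representative of its left coset `w W_J`. -/
def IsMinRep (cs : CoxeterSystem M W) (J : Set B) (w : W) : Prop :=
  ∀ v ∈ parab cs J, cs.length w ≤ cs.length (w * v)

variable (cs : CoxeterSystem M W) (J J' : Set B) (δ : parab cs J ≃* parab cs J')

/-- `δ` carries the set of simple reflections indexed by `J` onto the set of
simple reflections indexed by `J'`. -/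
def MapsSimples : Prop :=
  (∀ j, ∀ hj : j ∈ J, ∃ j' ∈ J', (δ (sJ cs J j hj) : W) = cs.simple j') ∧
  (∀ j' ∈ J', ∃ j, ∃ hj : j ∈ J, (δ (sJ cs J j hj) : W) = cs.simple j')

/-- `K` is a `w`-special subset of `J`. -/
def WSpecial (w : W) (K : Set B) : Prop :=
  K ⊆ J ∧ ∀ k ∈ K, ∃ j, ∃ hjJ : j ∈ J, j ∈ K ∧
    w * cs.simple k * w⁻¹ = (δ (sJ cs J j hjJ) : W)

/-- The set `I(J, w, δ)`: the union of all `w`-special subsets of `J`. -/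
def Iset (w : W) : Set B := ⋃₀ {K | WSpecial cs J J' δ w K}

/-- The set `W_J ·_δ V = {δ(u) v u⁻¹ : u ∈ W_J, v ∈ V}`. -/
def orbSet (V : Set W) : Set W :=
  {x | ∃ u : parab cs J, ∃ v ∈ V, x = (δ u : W) * v * (u : W)⁻¹}

/-- The orbit of `x` under the `δ`-twisted partial conjugation action of `W_J`. -/
def orbitOf (x : W) : Set W := orbSet cs J J' δ {x}

/-- The coset `w W_{I(J,w,δ)}`. -/
def coset (w : W) : Set W :=
  {x | ∃ v ∈ parab cs (Iset cs J J' δ w), x = w * v}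

/-- Elementary step `v →_i v'` of `δ`-twisted conjugation: `v' = δ(s_i) v s_i`
with `i ∈ J` and `ℓ(v') ≤ ℓ(v)`. -/
def StepRel (v v' : W) : Prop :=
  ∃ i, ∃ hi : i ∈ J, v' = (δ (sJ cs J i hi) : W) * v * cs.simple i ∧
    cs.length v' ≤ cs.length v

/-- The relation `v →_{J,δ} v'`. -/
def ToRel : W → W → Prop := Relation.ReflTransGen (StepRel cs J J' δ)

/-- The relation `v ≈_{J,δ} v'`. -/
def Approx (v v' : W) : Prop := ToRel cs J J' δ v v' ∧ ToRel cs J J' δ v' v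

/-- The Bruhat order on `W`. -/
def bruhatLE (cs : CoxeterSystem M W) : W → W → Prop :=
  Relation.ReflTransGen
    (fun a b => ∃ t, cs.IsReflection t ∧ b = a * t ∧ cs.length a < cs.length b)

/-- The set of minimal length elements in the orbit of `x`. -/
def orbMin (x : W) : Set W :=
  {y ∈ orbitOf cs J J' δ x | ∀ z ∈ orbitOf cs J J' δ x, cs.length y ≤ cs.length z}


/-- The relation `w ≤_{J,δ} w'` on `W^J`. -/
def leJδ (w w' : W) : Prop :=
  ∀ v' ∈ orbMin cs J J' δ w', ∃ v ∈ orbMin cs J J' δ w, bruhatLE cs v v'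

section StrongExchange

open List

attribute [local instance] Classical.decEq
attribute [local instance] Classical.propDecidable

variable (cs : CoxeterSystem M W)

local prefix:100 "s" => cs.simple
local prefix:100 "π" => cs.wordProd
local prefix:100 "ℓ" => cs.length
local prefix:100 "ris" => cs.rightInvSeq

lemma two_zmod2 : (2 : ZMod 2) = 0 := by decide

lemma add_self_zmod2 (a : ZMod 2) : a + a = 0 := by
  calc a + a = 2 * a := by ring
  _ = 0 := by rw [two_zmod2, zero_mul]

/-- The Tits involution on `W × ZMod 2` associated to a simple reflection. -/
noncomputable def sigma (i : B) : Equiv.Perm (W × ZMod 2) :=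
  Function.Involutive.toPerm
    (fun p => (s i * p.1 * s i, p.2 + if p.1 = s i then 1 else 0))
    (by
      rintro ⟨t, ε⟩
      have hs : s i * s i = 1 := cs.simple_mul_simple_self i
      have h1 : s i * (s i * t * s i) * s i = t := by
        calc s i * (s i * t * s i) * s i = (s i * s i) * t * (s i * s i) := by group
        _ = t := by rw [hs]; group
      have h2 : (s i * t * s i = s i) ↔ (t = s i) := by
        constructor
        · intro h
          have := congrArg (fun x => s i * x * s i) h
          rw [h1] at this
          rw [this, mul_assoc, hs, mul_one]
        · intro h; rw [h]; rw [mul_assoc, hs, mul_one]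
      refine Prod.ext h1 ?_
      show ε + _ + _ = ε
      by_cases h : t = s i
      · rw [if_pos h, if_pos (h2.mpr h), add_assoc]
        have : (1 + 1 : ZMod 2) = 0 := by decide
        rw [this, add_zero]
      · rw [if_neg h, if_neg (fun hh => h (h2.mp hh)), add_zero, add_zero])

lemma sigma_apply (i : B) (t : W) (ε : ZMod 2) :
    sigma cs i (t, ε) = (s i * t * s i, ε + if t = s i then 1 else 0) := rfl

/-- Product of the Tits involutions along a word. -/
noncomputable def sigmaProd (ω : List B) : Equiv.Perm (W × ZMod 2) :=
  (ω.map (sigma cs)).prod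

lemma rightInvSeq_cons (i : B) (ω : List B) :
    ris (i :: ω) = ((π ω)⁻¹ * s i * π ω) :: ris ω := rfl

lemma sigmaProd_apply (ω : List B) (t : W) (ε : ZMod 2) :
    sigmaProd cs ω (t, ε) =
      (π ω * t * (π ω)⁻¹, ε + ((ris ω).count t : ZMod 2)) := by
  induction ω generalizing t ε with
  | nil => simp [sigmaProd]
  | cons i ω ih =>
    have hP : sigmaProd cs (i :: ω) = sigma cs i * sigmaProd cs ω := by
      simp [sigmaProd]
    rw [hP, Equiv.Perm.mul_apply, ih, sigma_apply, rightInvSeq_cons]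
    have hcond : (π ω * t * (π ω)⁻¹ = s i) ↔ ((π ω)⁻¹ * s i * π ω = t) := by
      constructor
      · intro h; rw [← h]; group
      · intro h; rw [← h]; group
    have hπ : π (i :: ω) = s i * π ω := cs.wordProd_cons i ω
    refine Prod.ext ?_ ?_
    · show s i * (π ω * t * (π ω)⁻¹) * s i = π (i :: ω) * t * (π (i :: ω))⁻¹
      rw [hπ, mul_inv_rev, cs.inv_simple]; group
    · show ε + ((ris ω).count t : ZMod 2) + _ = ε + _
      rw [count_cons, add_assoc]
      congr 1
      push_cast
      congr 1
      by_cases h : (π ω)⁻¹ * s i * π ω = t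
      · rw [if_pos (hcond.mpr h), if_pos (beq_iff_eq.mpr h)]
      · rw [if_neg (fun hh => h (hcond.mp hh)), if_neg (by simpa using h)]

lemma alternatingWord_two_mul_succ (i j : B) (m : ℕ) :
    alternatingWord i j (2 * (m + 1)) = i :: j :: alternatingWord i j (2 * m) := by
  have h1 : 2 * (m + 1) = (2 * m + 1) + 1 := by ring
  rw [h1, alternatingWord_succ' i j (2 * m + 1), alternatingWord_succ' i j (2 * m)]
  simp [Nat.even_add_one, parity_simps]

lemma sigmaProd_alt (i j : B) (m : ℕ) :
    (sigma cs i * sigma cs j) ^ m = sigmaProd cs (alternatingWord i j (2 * m)) := by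
  induction m with
  | zero => simp [sigmaProd, alternatingWord]
  | succ m ih =>
    rw [alternatingWord_two_mul_succ, pow_succ', ih]
    simp [sigmaProd, mul_assoc]

lemma alternatingWord_one (i j : B) : alternatingWord i j 1 = [j] := by
  rw [show (1:ℕ) = 0 + 1 from rfl, alternatingWord_succ]
  simp [alternatingWord]

/-- Closed form for the right inversion sequence of an alternating word. -/
lemma rightInvSeq_alternatingWord (i j : B) (n : ℕ) :
    ris (alternatingWord i j n)
      = ((List.range n).map (fun k => π (alternatingWord i j (2 * k + 1)))).reverse := by
  induction n generalizing i j with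
  | zero => simp [alternatingWord]
  | succ n ih =>
    rw [alternatingWord_succ, cs.rightInvSeq_concat, ih j i]
    rw [List.range_succ_eq_map, List.map_cons, List.map_map, List.reverse_cons,
      ← List.map_reverse, List.map_map, ← List.map_reverse (f := _ ∘ Nat.succ),
      List.concat_eq_append]
    congr 1
    · apply List.map_congr_left
      intro k _
      show (MulAut.conj (s j)) (π (alternatingWord j i (2 * k + 1))) = _
      have h1 : 2 * (k + 1) + 1 = (2 * k + 2) + 1 := by ring
      have h2 : alternatingWord i j ((2 * k + 2) + 1)
          = j :: alternatingWord i j (2 * k + 2) := by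
        rw [alternatingWord_succ' i j (2 * k + 2), if_pos ⟨k + 1, by ring⟩]
      have h3 : alternatingWord i j (2 * k + 2) = (alternatingWord j i (2 * k + 1)).concat j := by
        rw [show 2 * k + 2 = (2 * k + 1) + 1 from rfl, alternatingWord_succ]
      show s j * (π (alternatingWord j i (2 * k + 1))) * (s j)⁻¹ = _
      rw [Function.comp_apply, h1, h2, cs.wordProd_cons, h3, cs.wordProd_concat, cs.inv_simple]
      group
    · show [s j] = [π (alternatingWord i j 1)]
      rw [alternatingWord_one, cs.wordProd_singleton]

lemma prod_alt_period (i j : B) (k : ℕ) :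
    π (alternatingWord i j (2 * (M i j + k) + 1)) = π (alternatingWord i j (2 * k + 1)) := by
  rw [cs.prod_alternatingWord_eq_mul_pow, cs.prod_alternatingWord_eq_mul_pow]
  have h1 : ¬ Even (2 * (M i j + k) + 1) := by simp [parity_simps]
  have h2 : ¬ Even (2 * k + 1) := by simp [parity_simps]
  rw [if_neg h1, if_neg h2]
  have e1 : (2 * (M i j + k) + 1) / 2 = M i j + k := by omega
  have e2 : (2 * k + 1) / 2 = k := by omega
  rw [e1, e2, pow_add, cs.simple_mul_simple_pow, one_mul]

lemma count_even_alt (i j : B) (t : W) :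
    Even ((ris (alternatingWord i j (2 * M i j))).count t) := by
  rw [rightInvSeq_alternatingWord, List.count_reverse]
  rw [show 2 * M i j = M i j + M i j from by ring, List.range_add, List.map_append,
    List.map_map, List.count_append]
  have h : List.map ((fun k => π (alternatingWord i j (2 * k + 1))) ∘ fun x => M i j + x)
      (List.range (M i j)) = List.map (fun k => π (alternatingWord i j (2 * k + 1)))
      (List.range (M i j)) := by
    apply List.map_congr_left
    intro k _
    exact prod_alt_period cs i j k
  rw [h]
  exact Even.add_self _

lemma sigma_liftable : M.IsLiftable (sigma cs) := by
  intro i j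
  rw [sigmaProd_alt]
  apply Equiv.ext
  rintro ⟨t, ε⟩
  rw [sigmaProd_apply]
  have hπ : π (alternatingWord i j (2 * M i j)) = 1 := by
    rw [cs.prod_alternatingWord_eq_mul_pow, if_pos ⟨M i j, by ring⟩,
      show 2 * M i j / 2 = M i j from by omega, cs.simple_mul_simple_pow, one_mul]
  obtain ⟨c, hc⟩ := count_even_alt cs i j t
  rw [hπ, hc]
  refine Prod.ext ?_ ?_
  · show 1 * t * 1⁻¹ = t
    group
  · show ε + ((c + c : ℕ) : ZMod 2) = ε
    push_cast
    rw [add_self_zmod2, add_zero]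

/-- The Tits homomorphism `W →* Perm (W × ZMod 2)`. -/
noncomputable def phi : W →* Equiv.Perm (W × ZMod 2) :=
  cs.lift ⟨sigma cs, sigma_liftable cs⟩

/-- Parity of the number of times `t` occurs in a right inversion sequence for `w`. -/
noncomputable def NN (w t : W) : ZMod 2 := (phi cs w (t, 0)).2

lemma phi_wordProd (ω : List B) (t : W) (ε : ZMod 2) :
    phi cs (π ω) (t, ε) = (π ω * t * (π ω)⁻¹, ε + ((ris ω).count t : ZMod 2)) := by
  have h : phi cs (π ω) = sigmaProd cs ω := by
    unfold wordProd sigmaProd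
    rw [map_list_prod (phi cs), List.map_map]
    congr 1
    apply List.map_congr_left
    intro k _
    exact cs.lift_apply_simple (sigma_liftable cs) k
  rw [h, sigmaProd_apply]

lemma phi_apply (w t : W) (ε : ZMod 2) :
    phi cs w (t, ε) = (w * t * w⁻¹, ε + NN cs w t) := by
  obtain ⟨ω, _, rfl⟩ := cs.exists_reduced_word w
  rw [phi_wordProd]
  unfold NN
  rw [phi_wordProd]
  simp

lemma NN_eq_count (ω : List B) (t : W) : NN cs (π ω) t = ((ris ω).count t : ZMod 2) := by
  unfold NN
  rw [phi_wordProd]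
  simp

lemma NN_cocycle (x y t : W) : NN cs (x * y) t = NN cs y t + NN cs x (y * t * y⁻¹) := by
  have h1 : phi cs (x * y) (t, 0) = phi cs x (phi cs y (t, 0)) := by
    rw [map_mul]; rfl
  rw [phi_apply, phi_apply, phi_apply] at h1
  have h2 := congrArg Prod.snd h1
  simpa using h2

lemma NN_one (t : W) : NN cs 1 t = 0 := by
  unfold NN
  rw [map_one]
  rfl

lemma NN_inv_conj (x u : W) : NN cs x⁻¹ (x * u * x⁻¹) = NN cs x u := by
  have h := NN_cocycle cs x x⁻¹ (x * u * x⁻¹)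
  rw [mul_inv_cancel, NN_one] at h
  rw [show x⁻¹ * (x * u * x⁻¹) * x⁻¹⁻¹ = u from by group] at h
  have h3 : ∀ a b : ZMod 2, 0 = a + b → a = b := by decide
  exact h3 _ _ h

lemma NN_simple_self (i : B) : NN cs (s i) (s i) = 1 := by
  rw [show s i = π [i] from (cs.wordProd_singleton i).symm, NN_eq_count,
    cs.rightInvSeq_singleton]
  simp

lemma NN_reflection_self {t : W} (ht : cs.IsReflection t) : NN cs t t = 1 := by
  obtain ⟨p, i, rfl⟩ := ht
  have key1 : NN cs (p * (s i * p⁻¹)) (p * s i * p⁻¹)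
      = NN cs (s i * p⁻¹) (p * s i * p⁻¹) + NN cs p (s i) := by
    rw [NN_cocycle]
    congr 2
    group
  have key2 : NN cs (s i * p⁻¹) (p * s i * p⁻¹)
      = NN cs p⁻¹ (p * s i * p⁻¹) + NN cs (s i) (s i) := by
    rw [NN_cocycle]
    congr 2
    group
  have key3 : NN cs p⁻¹ (p * s i * p⁻¹) = NN cs p (s i) := NN_inv_conj cs p (s i)
  calc NN cs (p * s i * p⁻¹) (p * s i * p⁻¹)
      = NN cs (p * (s i * p⁻¹)) (p * s i * p⁻¹) := by rw [mul_assoc]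
  _ = NN cs p (s i) + 1 + NN cs p (s i) := by
      rw [key1, key2, key3, NN_simple_self]
  _ = 1 := by
      exact (show ∀ a : ZMod 2, a + 1 + a = 1 from by decide) _
  
lemma length_lt_of_NN_one {w t : W} (h : NN cs w t = 1) : ℓ (w * t) < ℓ w := by
  obtain ⟨ω, hlen, hw⟩ := cs.exists_reduced_word w
  rw [hw, NN_eq_count] at h
  have hcount : (ris ω).count t ≠ 0 := by
    intro hc
    rw [hc] at h
    simp at h
  have hmem : t ∈ ris ω := List.count_pos_iff.mp (Nat.pos_of_ne_zero hcount)
  obtain ⟨k, hk, hget⟩ := List.mem_iff_getElem.mp hmem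
  have hk' : k < ω.length := by rwa [cs.length_rightInvSeq] at hk
  have hgd : (ris ω).getD k 1 = t := by rw [List.getD_eq_getElem _ _ hk, hget]
  have herase := cs.wordProd_mul_getD_rightInvSeq ω k
  rw [hgd] at herase
  rw [hw, herase]
  calc ℓ (π (ω.eraseIdx k)) ≤ (ω.eraseIdx k).length := cs.length_wordProd_le _
  _ = ω.length - 1 := by rw [List.length_eraseIdx]; simp [hk']
  _ < ω.length := by omega
  _ = ℓ (π ω) := by exact hlen.symm

lemma NN_one_of_length_lt {w t : W} (ht : cs.IsReflection t) (h : ℓ (w * t) < ℓ w) :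
    NN cs w t = 1 := by
  by_contra hne
  have h0 : NN cs w t = 0 := by
    rcases (show ∀ a : ZMod 2, a = 0 ∨ a = 1 from by decide) (NN cs w t) with h' | h'
    · exact h'
    · exact absurd h' hne
  have hc : NN cs (w * t) t = 1 := by
    rw [NN_cocycle, show t * t * t⁻¹ = t from by rw [ht.mul_self, one_mul, ht.inv],
      NN_reflection_self cs ht, h0, add_zero]
  have := length_lt_of_NN_one cs hc
  rw [mul_assoc, ht.mul_self, mul_one] at this
  omega

/-- The strong exchange property. -/
lemma strong_exchange {w t : W} (ht : cs.IsReflection t) (h : ℓ (w * t) < ℓ w)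
    {ω : List B} (hw : w = π ω) :
    ∃ k < ω.length, w * t = π (ω.eraseIdx k) := by
  have h1 : NN cs w t = 1 := NN_one_of_length_lt cs ht h
  rw [hw, NN_eq_count] at h1
  have hcount : (ris ω).count t ≠ 0 := by
    intro hc
    rw [hc] at h1
    simp at h1
  have hmem : t ∈ ris ω := List.count_pos_iff.mp (Nat.pos_of_ne_zero hcount)
  obtain ⟨k, hk, hget⟩ := List.mem_iff_getElem.mp hmem
  have hk' : k < ω.length := by rwa [cs.length_rightInvSeq] at hk
  refine ⟨k, hk', ?_⟩
  have hgd : (ris ω).getD k 1 = t := by rw [List.getD_eq_getElem _ _ hk, hget]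
  have herase := cs.wordProd_mul_getD_rightInvSeq ω k
  rw [hgd] at herase
  rw [hw, herase]

end StrongExchange

section Parabolic

open List

attribute [local instance] Classical.decEq
attribute [local instance] Classical.propDecidable

local prefix:100 "s" => cs.simple
local prefix:100 "π" => cs.wordProd
local prefix:100 "ℓ" => cs.length

lemma simple_mem_parab {j : B} (hj : j ∈ J) : s j ∈ parab cs J :=
  Subgroup.subset_closure ⟨j, hj, rfl⟩

lemma wordProd_mem_parab {ω : List B} (h : ∀ i ∈ ω, i ∈ J) : π ω ∈ parab cs J := by
  induction ω with
  | nil => simpa using one_mem _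
  | cons i ω ih =>
    rw [cs.wordProd_cons]
    exact mul_mem (simple_mem_parab cs J (h i List.mem_cons_self))
      (ih fun x hx => h x (List.mem_cons_of_mem _ hx))

lemma exists_J_word {b : W} (hb : b ∈ parab cs J) :
    ∃ ω, (∀ i ∈ ω, i ∈ J) ∧ b = π ω := by
  refine Subgroup.closure_induction ?_ ?_ ?_ ?_ hb
  · rintro x ⟨i, hi, rfl⟩
    exact ⟨[i], by simpa using hi, (cs.wordProd_singleton i).symm⟩
  · exact ⟨[], by simp, by simp⟩
  · rintro x y hx hy ⟨ω₁, h1, rfl⟩ ⟨ω₂, h2, rfl⟩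
    refine ⟨ω₁ ++ ω₂, ?_, (cs.wordProd_append ω₁ ω₂).symm⟩
    intro i hi
    rcases List.mem_append.mp hi with h | h
    exacts [h1 i h, h2 i h]
  · rintro x hx ⟨ω, h1, rfl⟩
    exact ⟨ω.reverse, fun i hi => h1 i (List.mem_reverse.mp hi), (cs.wordProd_reverse ω).symm⟩

lemma reduce_word : ∀ (n : ℕ) (ω : List B), ω.length ≤ n → (∀ i ∈ ω, i ∈ J) →
    ∃ ωr, (∀ i ∈ ωr, i ∈ J) ∧ cs.IsReduced ωr ∧ π ω = π ωr := by
  intro n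
  induction n with
  | zero =>
    intro ω hlen hJ
    have : ω = [] := List.eq_nil_of_length_eq_zero (by omega)
    subst this
    exact ⟨[], by simp, by simp [CoxeterSystem.IsReduced], rfl⟩
  | succ n ih =>
    intro ω hlen hJ
    by_cases hr : cs.IsReduced ω
    · exact ⟨ω, hJ, hr, rfl⟩
    classical
    have hex : ∃ m, ¬ cs.IsReduced (ω.take m) := ⟨ω.length, by rwa [List.take_length]⟩
    have hj₀spec : ¬ cs.IsReduced (ω.take (Nat.find hex)) := Nat.find_spec hex
    set j₀ := Nat.find hex with hj₀def
    have hj₀pos : 0 < j₀ := by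
      rcases Nat.eq_zero_or_pos j₀ with h | h
      · exfalso; apply hj₀spec; rw [h]; simp [CoxeterSystem.IsReduced]
      · exact h
    have hj₀le : j₀ ≤ ω.length := by
      by_contra hgt
      have := Nat.find_min hex (m := ω.length) (by rw [← hj₀def]; omega)
      rw [List.take_length] at this
      exact this hr
    set j := j₀ - 1 with hjdef
    have hjred : cs.IsReduced (ω.take j) :=
      not_not.mp (Nat.find_min hex (m := j) (by rw [← hj₀def]; omega))
    have hjlt : j < ω.length := by omega
    have htake : (ω.take j).concat ω[j] = ω.take (j+1) := List.take_concat_get hjlt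
    have hz : ℓ (π (ω.take j)) = j := by
      have h' : ℓ (π (ω.take j)) = (ω.take j).length := hjred
      rw [h', List.length_take]
      omega
    have hj1 : j + 1 = j₀ := by omega
    have hnred : ¬ cs.IsReduced (ω.take (j+1)) := by rw [hj1]; exact hj₀spec
    have hlen1 : (ω.take (j+1)).length = j + 1 := by rw [List.length_take]; omega
    have hprod : π (ω.take (j+1)) = π (ω.take j) * s (ω[j]) := by
      rw [← htake, cs.wordProd_concat]
    have hdec : ℓ (π (ω.take j) * s (ω[j])) < ℓ (π (ω.take j)) := by
      rcases cs.length_mul_simple (π (ω.take j)) ω[j] with h | h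
      · exfalso
        apply hnred
        show ℓ (π (ω.take (j+1))) = (ω.take (j+1)).length
        rw [hprod, h, hz, hlen1]
      · omega
    obtain ⟨k, hk, hke⟩ := strong_exchange cs (cs.isReflection_simple ω[j]) hdec rfl
    have hklen : k < j := by
      rw [List.length_take] at hk; omega
    have hωeq : π ω = π ((ω.take j).eraseIdx k ++ ω.drop (j+1)) := by
      conv_lhs => rw [← List.take_append_drop (j+1) ω]
      rw [cs.wordProd_append, cs.wordProd_append, hprod, hke]
    have hlen2 : ((ω.take j).eraseIdx k ++ ω.drop (j+1)).length ≤ n := by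
      rw [List.length_append, List.length_eraseIdx, List.length_take, List.length_drop]
      split <;> omega
    have hJ2 : ∀ i ∈ (ω.take j).eraseIdx k ++ ω.drop (j+1), i ∈ J := by
      intro i hi
      rcases List.mem_append.mp hi with h | h
      · exact hJ i (List.take_sublist j ω |>.subset (List.eraseIdx_sublist _ k |>.subset h))
      · exact hJ i (List.drop_sublist (j+1) ω |>.subset h)
    obtain ⟨ωr, a, b, c⟩ := ih _ hlen2 hJ2
    exact ⟨ωr, a, b, hωeq.trans c⟩

lemma exists_reduced_J_word {b : W} (hb : b ∈ parab cs J) :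
    ∃ ω, (∀ i ∈ ω, i ∈ J) ∧ cs.IsReduced ω ∧ b = π ω := by
  obtain ⟨ω, hJ, rfl⟩ := exists_J_word cs J hb
  obtain ⟨ωr, a, b, c⟩ := reduce_word cs J ω.length ω le_rfl hJ
  exact ⟨ωr, a, b, c⟩

/-- Length additivity: for `w ∈ W^J` and `u ∈ W_J`, `ℓ(wu) = ℓ(w) + ℓ(u)`. -/
lemma isMinRep_length_mul {w : W} (hw : IsMinRep cs J w) :
    ∀ u ∈ parab cs J, ℓ (w * u) = ℓ w + ℓ u := by
  have main : ∀ (n : ℕ), ∀ u ∈ parab cs J, ℓ u ≤ n → ℓ (w * u) = ℓ w + ℓ u := by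
    intro n
    induction n with
    | zero =>
      intro u hu hlen
      have : u = 1 := cs.length_eq_zero_iff.mp (by omega)
      subst this
      simp
    | succ n ih =>
      intro u hu hlen
      obtain ⟨ω, hJw, hred, rfl⟩ := exists_reduced_J_word cs J hu
      rcases List.eq_nil_or_concat ω with rfl | ⟨ω', j, rfl⟩
      · simp
      simp only [List.concat_eq_append] at hJw hred hu hlen ⊢
      -- u = π (ω' ++ [j])
      have hlenω : ℓ (π (ω' ++ [j])) = ω'.length + 1 := by
        have := hred
        rw [show cs.IsReduced (ω' ++ [j]) = (ℓ (π (ω' ++ [j])) = (ω' ++ [j]).length) from rfl] at this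
        simpa using this
      have hred' : cs.IsReduced ω' := by
        have h1 : ω' = (ω' ++ [j]).take ω'.length := by simp
        rw [h1]
        exact hred.take ω'.length
      have hu'mem : π ω' ∈ parab cs J := by
        apply wordProd_mem_parab
        intro i hi
        exact hJw i (List.mem_append.mpr (Or.inl hi))
      have hjJ : j ∈ J := hJw j (List.mem_append.mpr (Or.inr (List.mem_singleton_self j)))
      have hu'len : ℓ (π ω') = ω'.length := hred'
      have ihu' : ℓ (w * π ω') = ℓ w + ℓ (π ω') := by
        apply ih _ hu'mem
        omega
      have hsplit : π (ω' ++ [j]) = π ω' * s j := by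
        rw [cs.wordProd_append, cs.wordProd_singleton]
      rw [hsplit, ← mul_assoc]
      rcases cs.length_mul_simple (w * π ω') j with h | h
      · rw [h, ihu', hu'len, ← hsplit, hlenω]
        omega
      -- descent case: derive a contradiction
      exfalso
      obtain ⟨ρ, hρlen, hρ⟩ := cs.exists_reduced_word w
      have hredconc : cs.IsReduced (ρ ++ ω') := by
        show ℓ (π (ρ ++ ω')) = (ρ ++ ω').length
        rw [cs.wordProd_append, ← hρ, List.length_append, ihu', hρ, hρlen, hu'len]
      have hdec : ℓ ((π (ρ ++ ω')) * s j) < ℓ (π (ρ ++ ω')) := by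
        rw [cs.wordProd_append, ← hρ]
        omega
      obtain ⟨k, hk, hke⟩ := strong_exchange cs (cs.isReflection_simple j) hdec rfl
      rw [cs.wordProd_append, ← hρ] at hke
      rcases lt_or_ge k ρ.length with hkρ | hkρ
      · rw [List.eraseIdx_append_of_lt_length hkρ, cs.wordProd_append] at hke
        have hc : w * (π ω' * s j * (π ω')⁻¹) = π (ρ.eraseIdx k) := by
          have h' : w * π ω' * s j * (π ω')⁻¹ = π (ρ.eraseIdx k) := by
            rw [hke]; group
          rw [← h']; group
        have hcmem : π ω' * s j * (π ω')⁻¹ ∈ parab cs J :=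
          mul_mem (mul_mem hu'mem (simple_mem_parab cs J hjJ)) (inv_mem hu'mem)
        have h1 := hw _ hcmem
        rw [hc] at h1
        have h2 : ℓ (π (ρ.eraseIdx k)) ≤ ρ.length - 1 := by
          calc ℓ (π (ρ.eraseIdx k)) ≤ (ρ.eraseIdx k).length := cs.length_wordProd_le _
          _ = ρ.length - 1 := by rw [List.length_eraseIdx, if_pos hkρ]
        have h4 : ℓ w = ρ.length := by rw [hρ]; exact hρlen
        omega
      · rw [List.eraseIdx_append_of_length_le hkρ, cs.wordProd_append, ← hρ, mul_assoc] at hke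
        have hc : π ω' * s j = π (ω'.eraseIdx (k - ρ.length)) := mul_left_cancel hke
        have h2 : ℓ (π ω' * s j) ≤ ω'.length := by
          rw [hc]
          calc ℓ (π (ω'.eraseIdx (k - ρ.length))) ≤ (ω'.eraseIdx (k - ρ.length)).length :=
            cs.length_wordProd_le _
          _ ≤ ω'.length := by rw [List.length_eraseIdx]; split <;> omega
        rw [← hsplit, hlenω] at h2
        omega
  intro u hu
  exact main (ℓ u) u hu le_rfl

end Parabolic

section Delta

attribute [local instance] Classical.decEq

local prefix:100 "s" => cs.simple
local prefix:100 "π" => cs.wordProd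
local prefix:100 "ℓ" => cs.length

lemma delta_word (hδ : MapsSimples cs J J' δ) :
    ∀ (ω : List B), (∀ i ∈ ω, i ∈ J) → ∀ (u : parab cs J), (u : W) = π ω →
    ∃ ω', (∀ i' ∈ ω', i' ∈ J') ∧ ω'.length = ω.length ∧ ((δ u : W) = π ω') := by
  intro ω
  induction ω with
  | nil =>
    intro _ u hu
    have : u = 1 := by
      apply OneMemClass.coe_eq_one.mp
      simpa using hu
    subst this
    exact ⟨[], by simp, by simp, by simp⟩
  | cons i ω ih =>
    intro hJw u hu
    have hiJ : i ∈ J := hJw i List.mem_cons_self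
    set u₂ : parab cs J := (sJ cs J i hiJ)⁻¹ * u with hu₂def
    have hu₂ : (u₂ : W) = π ω := by
      have : (u₂ : W) = (s i)⁻¹ * (u : W) := rfl
      rw [this, hu, cs.wordProd_cons, inv_mul_cancel_left]
    obtain ⟨ω₂, hJ2, hlen2, heq2⟩ := ih (fun x hx => hJw x (List.mem_cons_of_mem _ hx)) u₂ hu₂
    obtain ⟨i', hi'J, hi'⟩ := hδ.1 i hiJ
    refine ⟨i' :: ω₂, ?_, by simp [hlen2], ?_⟩
    · intro x hx
      rcases List.mem_cons.mp hx with rfl | hx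
      · exact hi'J
      · exact hJ2 x hx
    · have : u = sJ cs J i hiJ * u₂ := by
        rw [hu₂def, mul_inv_cancel_left]
      rw [this, map_mul, Subgroup.coe_mul, hi', heq2, cs.wordProd_cons]

lemma mapsSimples_symm (hδ : MapsSimples cs J J' δ) : MapsSimples cs J' J δ.symm := by
  constructor
  · intro j' hj'
    obtain ⟨j, hj, heq⟩ := hδ.2 j' hj'
    refine ⟨j, hj, ?_⟩
    have h1 : δ (sJ cs J j hj) = sJ cs J' j' hj' := by
      apply Subtype.ext
      rw [heq]
      rfl
    rw [← h1, MulEquiv.symm_apply_apply]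
    rfl
  · intro j hj
    obtain ⟨j', hj', heq⟩ := hδ.1 j hj
    refine ⟨j', hj', ?_⟩
    have h1 : δ (sJ cs J j hj) = sJ cs J' j' hj' := by
      apply Subtype.ext
      rw [heq]
      rfl
    rw [← h1, MulEquiv.symm_apply_apply]
    rfl

lemma length_delta_le (hδ : MapsSimples cs J J' δ) (u : parab cs J) :
    ℓ ((δ u : W)) ≤ ℓ ((u : W)) := by
  obtain ⟨ω, hJw, hred, hu⟩ := exists_reduced_J_word cs J u.2
  obtain ⟨ω', hJ'w, hlen, heq⟩ := delta_word cs J J' δ hδ ω hJw u hu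
  rw [heq]
  calc ℓ (π ω') ≤ ω'.length := cs.length_wordProd_le _
  _ = ω.length := hlen
  _ = ℓ ((u : W)) := by rw [hu]; exact hred.symm

lemma length_delta (hδ : MapsSimples cs J J' δ) (u : parab cs J) :
    ℓ ((δ u : W)) = ℓ ((u : W)) := by
  refine le_antisymm (length_delta_le cs J J' δ hδ u) ?_
  have h := length_delta_le cs J' J δ.symm (mapsSimples_symm cs J J' δ hδ) (δ u)
  rwa [MulEquiv.symm_apply_apply] at h

/-- Key double-coset uniqueness lemma. -/
lemma double_coset_unique {w w' : W} (hw : IsMinRep cs J w) (hw' : IsMinRep cs J w')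
    (hlen : ℓ w = ℓ w') :
    ∀ (n : ℕ) (a b : W), a ∈ parab cs J' → b ∈ parab cs J → ℓ b ≤ n →
      a * w = w' * b → ℓ (a * w) = ℓ w + ℓ a → w = w' := by
  intro n
  induction n with
  | zero =>
    intro a b ha hb hblen heq hadd
    have hb1 : b = 1 := cs.length_eq_zero_iff.mp (by omega)
    subst hb1
    rw [mul_one] at heq
    have h1 : ℓ w' = ℓ w + ℓ a := by rw [← heq]; exact hadd
    have ha0 : ℓ a = 0 := by omega
    have : a = 1 := cs.length_eq_zero_iff.mp ha0
    subst this
    rw [one_mul] at heq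
    exact heq
  | succ n ih =>
    intro a b ha hb hblen heq hadd
    obtain ⟨ωb, hJb, hredb, rfl⟩ := exists_reduced_J_word cs J hb
    rcases List.eq_nil_or_concat ωb with rfl | ⟨ωb', j, rfl⟩
    · exact ih a _ ha hb (by simpa using cs.length_wordProd_le ([] : List B)) heq hadd
    simp only [List.concat_eq_append] at hJb hredb heq hadd hblen hb
    have hjJ : j ∈ J := hJb j (List.mem_append.mpr (Or.inr (List.mem_singleton_self j)))
    have hsplitb : π (ωb' ++ [j]) = π ωb' * s j := by
      rw [cs.wordProd_append, cs.wordProd_singleton]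
    have hredb' : cs.IsReduced ωb' := by
      have h1 : ωb' = (ωb' ++ [j]).take ωb'.length := by simp
      rw [h1]
      exact hredb.take ωb'.length
    have hb'mem : π ωb' ∈ parab cs J := by
      apply wordProd_mem_parab
      intro i hi
      exact hJb i (List.mem_append.mpr (Or.inl hi))
    have hlenb : ℓ (π (ωb' ++ [j])) = ωb'.length + 1 := by
      have h1 : ℓ (π (ωb' ++ [j])) = (ωb' ++ [j]).length := hredb
      simpa using h1
    have hlenb' : ℓ (π ωb') = ωb'.length := hredb'
    -- z = a * w,  z * s j = w' * π ωb'
    have hzadd : ℓ (a * w) = ℓ w' + (ωb'.length + 1) := by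
      rw [heq, isMinRep_length_mul cs J hw' _ hb, hlenb]
    have hzs : (a * w) * s j = w' * π ωb' := by
      rw [heq, hsplitb, mul_assoc, mul_assoc, cs.simple_mul_simple_self, mul_one]
    have hdec : ℓ ((a * w) * s j) < ℓ (a * w) := by
      rw [hzs, isMinRep_length_mul cs J hw' _ hb'mem, hlenb']
      omega
    obtain ⟨ρa, hJa, hreda, haeq⟩ := exists_reduced_J_word cs J' ha
    obtain ⟨ρw, hρwlen, hρw⟩ := cs.exists_reduced_word w
    have hπ : π (ρa ++ ρw) = a * w := by rw [cs.wordProd_append, ← haeq, ← hρw]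
    have hdec2 : ℓ ((π (ρa ++ ρw)) * s j) < ℓ (π (ρa ++ ρw)) := by rw [hπ]; exact hdec
    obtain ⟨k, hk, hke⟩ := strong_exchange cs (cs.isReflection_simple j) hdec2 rfl
    rw [hπ] at hke
    rcases lt_or_ge k ρa.length with hkρ | hkρ
    · -- deletion in the a part
      rw [List.eraseIdx_append_of_lt_length hkρ, cs.wordProd_append, ← hρw] at hke
      set a₂ := π (ρa.eraseIdx k) with ha₂def
      have ha₂mem : a₂ ∈ parab cs J' := by
        apply wordProd_mem_parab
        intro i hi
        exact hJa i (List.eraseIdx_sublist ρa k |>.subset hi)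
      have ha₂len : ℓ a₂ ≤ ℓ a - 1 := by
        calc ℓ a₂ ≤ (ρa.eraseIdx k).length := cs.length_wordProd_le _
        _ = ρa.length - 1 := by rw [List.length_eraseIdx, if_pos hkρ]
        _ = ℓ a - 1 := by rw [haeq]; rw [show ℓ (π ρa) = ρa.length from hreda]
      have halen : ℓ a ≥ 1 := by
        rw [haeq, show ℓ (π ρa) = ρa.length from hreda]
        omega
      have hawj : a₂ * w = (a * w) * s j := hke.symm
      have hs1 : ℓ ((a * w) * s j) = ℓ w + ℓ a - 1 := by
        rcases cs.length_mul_simple (a * w) j with h | h <;> omega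
      have hle : ℓ (a₂ * w) ≤ ℓ a₂ + ℓ w := cs.length_mul_le a₂ w
      have h3 : ℓ (a₂ * w) = ℓ w + ℓ a - 1 := by rw [hawj, hs1]
      have hadd₂ : ℓ (a₂ * w) = ℓ w + ℓ a₂ := by omega
      have heq₂ : a₂ * w = w' * π ωb' := by rw [← hke]; exact hzs
      refine ih a₂ (π ωb') ha₂mem hb'mem ?_ heq₂ hadd₂
      rw [hlenb']
      have : ℓ (π (ωb' ++ [j])) ≤ n + 1 := hblen
      omega
    · -- deletion in the w part: contradiction
      exfalso
      rw [List.eraseIdx_append_of_length_le hkρ, cs.wordProd_append, ← haeq] at hke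
      have hc : w * s j = π (ρw.eraseIdx (k - ρa.length)) := by
        have := hke
        rw [show a * w * s j = a * (w * s j) from by group] at this
        exact mul_left_cancel this
      have h2 : ℓ (w * s j) ≤ ρw.length := by
        rw [hc]
        calc ℓ (π (ρw.eraseIdx (k - ρa.length))) ≤ (ρw.eraseIdx (k - ρa.length)).length :=
          cs.length_wordProd_le _
        _ ≤ ρw.length := by rw [List.length_eraseIdx]; split <;> omega
      have h3 : ℓ (w * s j) = ℓ w + 1 := by
        rw [isMinRep_length_mul cs J hw _ (simple_mem_parab cs J hjJ), cs.length_simple]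
      have h4 : ℓ w = ρw.length := by rw [hρw]; exact hρwlen
      omega

lemma orbit_length_ge (hδ : MapsSimples cs J J' δ) {w : W} (hw : IsMinRep cs J w)
    (u : parab cs J) : ℓ w ≤ ℓ ((δ u : W) * w * (u : W)⁻¹) := by
  have h1 : ℓ (w * (u : W)⁻¹) = ℓ w + ℓ ((u : W)) := by
    have h := isMinRep_length_mul cs J hw ((u⁻¹ : parab cs J) : W) (u⁻¹).2
    have hcoe : ((u⁻¹ : parab cs J) : W) = ((u : W))⁻¹ := rfl
    rw [hcoe, cs.length_inv] at h
    exact h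
  have h2 : ℓ ((δ u : W)) = ℓ ((u : W)) := length_delta cs J J' δ hδ u
  have h3 := cs.length_mul_ge_length_sub_length' ((δ u : W)) (w * (u : W)⁻¹)
  rw [show (δ u : W) * (w * (u : W)⁻¹) = (δ u : W) * w * (u : W)⁻¹ from by group] at h3
  omega

/-- If two minimal coset representatives lie in the same twisted orbit, they are equal. -/
lemma minRep_orbit_unique (hδ : MapsSimples cs J J' δ) {w w' : W}
    (hw : IsMinRep cs J w) (hw' : IsMinRep cs J w')
    (u : parab cs J) (heq : w' = (δ u : W) * w * (u : W)⁻¹) : w = w' := by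
  have h1 : ℓ w ≤ ℓ w' := heq ▸ orbit_length_ge cs J J' δ hδ hw u
  have hrev : w = (δ u⁻¹ : W) * w' * ((u⁻¹ : parab cs J) : W)⁻¹ := by
    rw [heq, map_inv]
    push_cast
    group
  have h2 : ℓ w' ≤ ℓ w := hrev ▸ orbit_length_ge cs J J' δ hδ hw' u⁻¹
  have hlen : ℓ w = ℓ w':= le_antisymm h1 h2
  have hz : (δ u : W) * w = w' * (u : W) := by
    rw [heq]; group
  have hadd : ℓ ((δ u : W) * w) = ℓ w + ℓ ((δ u : W)) := by
    rw [hz, isMinRep_length_mul cs J hw' _ u.2, hlen, length_delta cs J J' δ hδ u]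
  exact double_coset_unique cs J J' hw hw' hlen (ℓ ((u : W))) ((δ u : W)) ((u : W))
    (δ u).2 u.2 le_rfl hz hadd

end Delta

section Main

lemma mem_orbitOf_iff {x y : W} :
    y ∈ orbitOf cs J J' δ x ↔ ∃ u : parab cs J, y = (δ u : W) * x * (u : W)⁻¹ := by
  constructor
  · rintro ⟨u, v, hv, rfl⟩
    rw [Set.mem_singleton_iff] at hv
    subst hv
    exact ⟨u, rfl⟩
  · rintro ⟨u, rfl⟩
    exact ⟨u, x, rfl, rfl⟩

lemma self_mem_orbitOf (x : W) : x ∈ orbitOf cs J J' δ x :=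
  (mem_orbitOf_iff cs J J' δ).mpr ⟨1, by simp⟩

lemma orbitOf_symm {x y : W} (h : y ∈ orbitOf cs J J' δ x) : x ∈ orbitOf cs J J' δ y := by
  obtain ⟨u, rfl⟩ := (mem_orbitOf_iff cs J J' δ).mp h
  refine (mem_orbitOf_iff cs J J' δ).mpr ⟨u⁻¹, ?_⟩
  rw [map_inv]
  push_cast
  group

lemma orbitOf_trans {x y z : W} (hxy : y ∈ orbitOf cs J J' δ x)
    (hyz : z ∈ orbitOf cs J J' δ y) : z ∈ orbitOf cs J J' δ x := by
  obtain ⟨u, rfl⟩ := (mem_orbitOf_iff cs J J' δ).mp hxy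
  obtain ⟨v, rfl⟩ := (mem_orbitOf_iff cs J J' δ).mp hyz
  refine (mem_orbitOf_iff cs J J' δ).mpr ⟨v * u, ?_⟩
  rw [map_mul]
  push_cast
  group

lemma orbMin_nonempty (x : W) : (orbMin cs J J' δ x).Nonempty := by
  have hex : ∃ n, ∃ y ∈ orbitOf cs J J' δ x, cs.length y = n :=
    ⟨cs.length x, x, self_mem_orbitOf cs J J' δ x, rfl⟩
  classical
  obtain ⟨y, hy, hylen⟩ := Nat.find_spec hex
  refine ⟨y, hy, ?_⟩
  intro z hz
  rw [hylen]
  exact Nat.find_min' hex ⟨z, hz, rfl⟩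

lemma bruhatLE_length_le {x y : W} (h : bruhatLE cs x y) :
    x = y ∨ cs.length x < cs.length y := by
  induction h with
  | refl => exact Or.inl rfl
  | tail hab hbc ih =>
    obtain ⟨t, _, _, hlt⟩ := hbc
    rcases ih with rfl | hlen
    · exact Or.inr hlt
    · exact Or.inr (lt_trans hlen hlt)

end Main

/-- `≤_{J,δ}` is a partial order on `W^J`: reflexive,
transitive, and antisymmetric. -/
theorem stmt10 (hδ : MapsSimples cs J J' δ) :
    (∀ w : W, IsMinRep cs J w → leJδ cs J J' δ w w) ∧
    (∀ w₁ w₂ w₃ : W, IsMinRep cs J w₁ → IsMinRep cs J w₂ → IsMinRep cs J w₃ →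
      leJδ cs J J' δ w₁ w₂ → leJδ cs J J' δ w₂ w₃ → leJδ cs J J' δ w₁ w₃) ∧
    (∀ w₁ w₂ : W, IsMinRep cs J w₁ → IsMinRep cs J w₂ →
      leJδ cs J J' δ w₁ w₂ → leJδ cs J J' δ w₂ w₁ → w₁ = w₂) := by
  refine ⟨?_, ?_, ?_⟩
  · -- reflexivity
    intro w _ v' hv'
    exact ⟨v', hv', Relation.ReflTransGen.refl⟩
  · -- transitivity
    intro w₁ w₂ w₃ _ _ _ h12 h23 v₃ hv₃
    obtain ⟨v₂, hv₂, h2⟩ := h23 v₃ hv₃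
    obtain ⟨v₁, hv₁, h1⟩ := h12 v₂ hv₂
    exact ⟨v₁, hv₁, h1.trans h2⟩
  · -- antisymmetry
    intro w₁ w₂ hw₁ hw₂ h12 h21
    obtain ⟨v₂, hv₂⟩ := orbMin_nonempty cs J J' δ w₂
    obtain ⟨v₁, hv₁, hb1⟩ := h12 v₂ hv₂
    obtain ⟨u₂, hu₂, hb2⟩ := h21 v₁ hv₁
    -- all lengths equal
    have hl1 : cs.length u₂ ≤ cs.length v₂ := hu₂.2 v₂ hv₂.1
    have hl2 : cs.length v₂ ≤ cs.length u₂ := hv₂.2 u₂ hu₂.1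
    have he1 : u₂ = v₁ := by
      rcases bruhatLE_length_le cs hb2 with h | h
      · exact h
      exfalso
      rcases bruhatLE_length_le cs hb1 with h' | h'
      · rw [h'] at h; omega
      · omega
    -- u₂ = v₁ lies in both orbits
    have hmem1 : v₁ ∈ orbitOf cs J J' δ w₁ := hv₁.1
    have hmem2 : v₁ ∈ orbitOf cs J J' δ w₂ := he1 ▸ hu₂.1
    have hw2orb : w₂ ∈ orbitOf cs J J' δ w₁ :=
      orbitOf_trans cs J J' δ hmem1 (orbitOf_symm cs J J' δ hmem2)
    obtain ⟨u, hu⟩ := (mem_orbitOf_iff cs J J' δ).mp hw2orb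
    exact minRep_orbit_unique cs J J' δ hδ hw₁ hw₂ u hu

end PartialConjugation
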